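/- Let Q be a quandle with operation ▷ and inverse operation ▷⁻¹, and let B(Q) be the associated biquandle with operations a^b := a ▷ b, a^{b̄} := a ▷⁻¹ b, a_b := a, a_{b̄} := a. Then B(Q) is self-flip, i.e. there exists a biquandle isomorphism from B(Q) to Flip(B(Q)), if and only if Q is trivial, i.e. a ▷ b = a for all a,b ∈ Q. -/
import Mathlib


/-- A set with four binary operations: `ur a b = a^b` (upper right),
`ul a b = a^{b̄}` (upper left), `lr a b = a_b` (lower right),
`ll a b = a_{b̄}` (lower left). -/
structure BiquandleOps (B : Type*) where
  ur : B → B → B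
  ul : B → B → B
  lr : B → B → B
  ll : B → B → B

/-- The Kauffman–Radford biquandle axioms (1)–(4). -/
def IsBiquandle {B : Type*} (Q : BiquandleOps B) : Prop :=
  -- axiom (1)
  (∀ a b, Q.ul (Q.ur a b) (Q.lr b a) = a) ∧
  (∀ a b, Q.ll (Q.lr b a) (Q.ur a b) = b) ∧
  (∀ a b, Q.ur (Q.ul a b) (Q.ll b a) = a) ∧
  (∀ a b, Q.lr (Q.ll b a) (Q.ul a b) = b) ∧
  -- axiom (2)
  (∀ a b, ∃ x, x = Q.ur a (Q.ll b x) ∧ a = Q.ul x b ∧ b = Q.lr (Q.ll b x) a) ∧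
  (∀ a b, ∃ y, y = Q.ul a (Q.lr b y) ∧ a = Q.ur y b ∧ b = Q.ll (Q.lr b y) a) ∧
  -- axiom (3)
  (∀ a b c, Q.ur (Q.ur a b) c = Q.ur (Q.ur a (Q.lr c b)) (Q.ur b c)) ∧
  (∀ a b c, Q.lr (Q.lr c b) a = Q.lr (Q.lr c (Q.ur a b)) (Q.lr b a)) ∧
  (∀ a b c, Q.ur (Q.lr b a) (Q.lr c (Q.ur a b)) = Q.lr (Q.ur b c) (Q.ur a (Q.lr c b))) ∧
  (∀ a b c, Q.ul (Q.ul a b) c = Q.ul (Q.ul a (Q.ll c b)) (Q.ul b c)) ∧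
  (∀ a b c, Q.ll (Q.ll c b) a = Q.ll (Q.ll c (Q.ul a b)) (Q.ll b a)) ∧
  (∀ a b c, Q.ul (Q.ll b a) (Q.ll c (Q.ul a b)) = Q.ll (Q.ul b c) (Q.ul a (Q.ll c b))) ∧
  -- axiom (4)
  (∀ a, ∃ x, x = Q.lr a x ∧ a = Q.ur x a) ∧
  (∀ a, ∃ y, y = Q.ul a y ∧ a = Q.ll y a)

/-- The obverse: interchange right and left operations. -/
def Obv {B : Type*} (Q : BiquandleOps B) : BiquandleOps B :=
  ⟨Q.ul, Q.ur, Q.ll, Q.lr⟩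

/-- The flip: interchange upper and lower operations. -/
def Flip {B : Type*} (Q : BiquandleOps B) : BiquandleOps B :=
  ⟨Q.lr, Q.ll, Q.ur, Q.ul⟩

/-- A biquandle homomorphism: a map preserving all four operations. -/
def IsBiquandleHom {B T : Type*} (Q : BiquandleOps B) (R : BiquandleOps T)
    (φ : B → T) : Prop :=
  (∀ a b, φ (Q.ur a b) = R.ur (φ a) (φ b)) ∧
  (∀ a b, φ (Q.ul a b) = R.ul (φ a) (φ b)) ∧
  (∀ a b, φ (Q.lr a b) = R.lr (φ a) (φ b)) ∧
  (∀ a b, φ (Q.ll a b) = R.ll (φ a) (φ b))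

/-- The biquandle associated to a quandle is self-flip iff the quandle is trivial. -/
theorem quandle_biquandle_selfFlip_iff_trivial {Q : Type*} (tr ti : Q → Q → Q)
    (hidem : ∀ a, tr a a = a)
    (hinv1 : ∀ a b, ti (tr a b) b = a)
    (hinv2 : ∀ a b, tr (ti a b) b = a)
    (hdist : ∀ a b c, tr (tr a b) c = tr (tr a c) (tr b c)) :
    (∃ φ : Q → Q, Function.Bijective φ ∧
      IsBiquandleHom (⟨tr, ti, fun a _ => a, fun a _ => a⟩ : BiquandleOps Q)
        (Flip ⟨tr, ti, fun a _ => a, fun a _ => a⟩) φ) ↔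
    (∀ a b, tr a b = a) := by
  constructor
  · rintro ⟨φ, hbij, h1, h2, h3, h4⟩ a b
    exact hbij.injective (h1 a b)
  · intro htriv
    have hti : ∀ a b, ti a b = a := fun a b => by
      have := hinv2 a b; rwa [htriv] at this
    exact ⟨id, Function.bijective_id,
      fun a b => htriv a b, fun a b => hti a b, fun a b => (htriv a b).symm,
      fun a b => (hti a b).symm⟩
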